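/- Let v, w ≥ 1 and C ≥ 0, and set V = v + w − 1. For n ∈ ℕ let (η_A)_{A ∈ 𝒫_v(n)} and (η'_B)_{B ∈ 𝒫_w(n)} be real random variables on a common probability space such that all products η_{A₁}η_{A₂}η'_{B₁}η'_{B₂} are integrable and: (i) E[η_{A₁}η_{A₂}η'_{B₁}η'_{B₂}] = 0 whenever one of the four index sets A₁, A₂, B₁, B₂ is disjoint from the union of the other three; (ii) |E[η_{A₁}η_{A₂}η'_{B₁}η'_{B₂}]| ≤ C for all quadruples. Then E[(n^{−(v−1/2)} Σ_{A ∈ 𝒫_v(n)} η_A)² · (n^{−(w−1/2)} Σ_{B ∈ 𝒫_w(n)} η'_B)²] ≤ C · ((2V)!)³. -/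

import Mathlib

open MeasureTheory

namespace Stmt14Aux

lemma meet_card {α : Type*} [DecidableEq α] (s t : Finset α) (h : ¬ Disjoint s t) :
    (s ∪ t).card + 1 ≤ s.card + t.card := by
  have h2 := Finset.card_union_add_card_inter s t
  have : 1 ≤ (s ∩ t).card := by
    rw [Finset.one_le_card]
    rwa [Finset.disjoint_iff_inter_eq_empty, ← ne_eq, ← Finset.nonempty_iff_ne_empty] at h
  omega

lemma union4_card_bound {α : Type*} [DecidableEq α] (A₁ A₂ B₁ B₂ : Finset α)
    (h1 : ¬ Disjoint A₁ (A₂ ∪ B₁ ∪ B₂)) (h2 : ¬ Disjoint A₂ (A₁ ∪ B₁ ∪ B₂))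
    (h3 : ¬ Disjoint B₁ (A₁ ∪ A₂ ∪ B₂)) (h4 : ¬ Disjoint B₂ (A₁ ∪ A₂ ∪ B₁)) :
    (A₁ ∪ A₂ ∪ B₁ ∪ B₂).card + 2 ≤ A₁.card + A₂.card + B₁.card + B₂.card := by
  simp only [Finset.disjoint_union_right, not_and_or] at h1 h2 h3 h4
  by_cases dA : Disjoint A₁ A₂ <;> by_cases dB : Disjoint B₁ B₂
  · have hA1 : ¬ Disjoint (B₁ ∪ B₂) A₁ := fun hd => by
      rw [Finset.disjoint_union_left] at hd
      rcases h1 with (h | h) | h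
      exacts [h dA, h hd.1.symm, h hd.2.symm]
    have hA2 : ¬ Disjoint (B₁ ∪ B₂ ∪ A₁) A₂ := fun hd => by
      rw [Finset.disjoint_union_left, Finset.disjoint_union_left] at hd
      rcases h2 with (h | h) | h
      exacts [h dA.symm, h hd.1.1.symm, h hd.1.2.symm]
    have e : A₁ ∪ A₂ ∪ B₁ ∪ B₂ = B₁ ∪ B₂ ∪ A₁ ∪ A₂ := by
      rw [Finset.union_assoc, Finset.union_comm (A₁ ∪ A₂), ← Finset.union_assoc]
    have c1 := meet_card (B₁ ∪ B₂) A₁ hA1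
    have c2 := meet_card (B₁ ∪ B₂ ∪ A₁) A₂ hA2
    have c3 := Finset.card_union_le B₁ B₂
    rw [e]; omega
  · have hA1 : ¬ Disjoint (B₁ ∪ B₂) A₁ := fun hd => by
      rw [Finset.disjoint_union_left] at hd
      rcases h1 with (h | h) | h
      exacts [h dA, h hd.1.symm, h hd.2.symm]
    have e : A₁ ∪ A₂ ∪ B₁ ∪ B₂ = B₁ ∪ B₂ ∪ A₁ ∪ A₂ := by
      rw [Finset.union_assoc, Finset.union_comm (A₁ ∪ A₂), ← Finset.union_assoc]
    have c1 := meet_card B₁ B₂ dB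
    have c2 := meet_card (B₁ ∪ B₂) A₁ hA1
    have c3 := Finset.card_union_le (B₁ ∪ B₂ ∪ A₁) A₂
    rw [e]; omega
  · have hB1 : ¬ Disjoint (A₁ ∪ A₂) B₁ := fun hd => by
      rw [Finset.disjoint_union_left] at hd
      rcases h3 with (h | h) | h
      exacts [h hd.1.symm, h hd.2.symm, h dB]
    have c1 := meet_card A₁ A₂ dA
    have c2 := meet_card (A₁ ∪ A₂) B₁ hB1
    have c3 := Finset.card_union_le (A₁ ∪ A₂ ∪ B₁) B₂
    omega
  · have c1 := meet_card A₁ A₂ dA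
    have c2 := meet_card B₁ B₂ dB
    have c3 := Finset.card_union_le (A₁ ∪ A₂) (B₁ ∪ B₂)
    have e : A₁ ∪ A₂ ∪ B₁ ∪ B₂ = (A₁ ∪ A₂) ∪ (B₁ ∪ B₂) := by
      rw [Finset.union_assoc]
    rw [e]; omega


variable {n : ℕ}

def lst (A U : Finset (Fin n)) : List (Fin n) :=
  A.sort (· ≤ ·) ++ (U \ A).sort (· ≤ ·)

lemma lst_nodup (A U : Finset (Fin n)) : (lst A U).Nodup := by
  refine List.Nodup.append (Finset.sort_nodup _ _) (Finset.sort_nodup _ _) ?_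
  intro x hx hx'
  rw [Finset.mem_sort] at hx hx'
  exact (Finset.mem_sdiff.mp hx').2 hx

lemma lst_length {A U : Finset (Fin n)} (h : A ⊆ U) : (lst A U).length = U.card := by
  have h1 : A.card ≤ U.card := Finset.card_le_card h
  simp only [lst, List.length_append, Finset.length_sort, Finset.card_sdiff_of_subset h]
  omega

lemma mem_lst {A U : Finset (Fin n)} (h : A ⊆ U) {x : Fin n} : x ∈ lst A U ↔ x ∈ U := by
  simp only [lst, List.mem_append, Finset.mem_sort, Finset.mem_sdiff]
  constructor
  · rintro (hx | hx)
    exacts [h hx, hx.1]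
  · intro hx
    by_cases hA : x ∈ A
    exacts [Or.inl hA, Or.inr ⟨hx, hA⟩]

variable [NeZero n]

def gf (k : ℕ) (A U : Finset (Fin n)) : Fin k → Fin n :=
  fun i => (lst A U).getD i default

def pos (k : ℕ) (A U X : Finset (Fin n)) : Finset (Fin k) :=
  Finset.univ.filter
    (fun i => (i : ℕ) < (lst A U).length ∧ (lst A U).getD i default ∈ X)

lemma pos_image {k : ℕ} {A U X : Finset (Fin n)} (hAU : A ⊆ U) (hU : U.card ≤ k)
    (hX : X ⊆ U) : (pos k A U X).image (gf k A U) = X := by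
  ext x
  simp only [pos, gf, Finset.mem_image, Finset.mem_filter, Finset.mem_univ, true_and]
  constructor
  · rintro ⟨i, ⟨hi, hmem⟩, rfl⟩
    exact hmem
  · intro hx
    have hxl : x ∈ lst A U := (mem_lst hAU).2 (hX hx)
    obtain ⟨j, hj, hjx⟩ := List.mem_iff_getElem.1 hxl
    have hjk : j < k := lt_of_lt_of_le (by rwa [lst_length hAU] at hj) hU
    refine ⟨⟨j, hjk⟩, ⟨hj, ?_⟩, ?_⟩ <;>
      simp only [List.getD_eq_getElem _ _ hj, hjx] <;> exact hx

lemma pos_card {k : ℕ} {A U X : Finset (Fin n)} (hAU : A ⊆ U) (hU : U.card ≤ k)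
    (hX : X ⊆ U) : (pos k A U X).card = X.card := by
  have hinj : Set.InjOn (gf k A U) (pos k A U X) := by
    intro i hi j hj hij
    simp only [pos, Finset.coe_filter, Set.mem_setOf_eq, Finset.mem_univ, true_and] at hi hj
    have hi1 : (i : ℕ) < (lst A U).length := hi.1
    have hj1 : (j : ℕ) < (lst A U).length := hj.1
    simp only [gf, List.getD_eq_getElem _ _ hi1, List.getD_eq_getElem _ _ hj1] at hij
    exact Fin.ext (((lst_nodup A U).getElem_inj_iff).1 hij)
  calc (pos k A U X).card = ((pos k A U X).image (gf k A U)).card :=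
        (Finset.card_image_of_injOn hinj).symm
    _ = X.card := by rw [pos_image hAU hU hX]

lemma firstv_image {k : ℕ} {A U : Finset (Fin n)} (hAU : A ⊆ U) (hU : U.card ≤ k) :
    (Finset.univ.filter (fun i : Fin k => (i : ℕ) < A.card)).image (gf k A U) = A := by
  have hlen : A.card ≤ (lst A U).length := by
    rw [lst_length hAU]; exact Finset.card_le_card hAU
  ext x
  simp only [Finset.mem_image, Finset.mem_filter, Finset.mem_univ, true_and]
  constructor
  · rintro ⟨i, hi, rfl⟩
    have h1 : (i : ℕ) < (A.sort (· ≤ ·)).length := by rwa [Finset.length_sort]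
    have h2 : (i : ℕ) < (lst A U).length := lt_of_lt_of_le hi hlen
    have : gf k A U i = (A.sort (· ≤ ·))[(i : ℕ)] :=
      (List.getD_eq_getElem _ _ h2).trans (List.getElem_append_left h1)
    rw [this]
    exact Finset.mem_sort (· ≤ ·) |>.1 (List.getElem_mem h1)
  · intro hx
    have hxs : x ∈ A.sort (· ≤ ·) := (Finset.mem_sort _).2 hx
    obtain ⟨j, hj, hjx⟩ := List.mem_iff_getElem.1 hxs
    have hjA : j < A.card := by rwa [Finset.length_sort] at hj
    have hjl : j < (lst A U).length := lt_of_lt_of_le hjA hlen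
    have hjk : j < k := lt_of_lt_of_le hjl (by rw [lst_length hAU]; exact hU)
    refine ⟨⟨j, hjk⟩, hjA, ?_⟩
    exact (List.getD_eq_getElem _ _ hjl).trans ((List.getElem_append_left hj).trans hjx)


lemma choose_le_factorial (k j : ℕ) : k.choose j ≤ k.factorial := by
  rcases le_or_gt j k with h | h
  · calc k.choose j ≤ k.choose j * (j.factorial * (k - j).factorial) :=
          Nat.le_mul_of_pos_right _ (Nat.mul_pos j.factorial_pos (k - j).factorial_pos)
      _ = k.factorial := by rw [← mul_assoc]; exact Nat.choose_mul_factorial_mul_factorial h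
  · simp [Nat.choose_eq_zero_of_lt h]

lemma count_bound (v w k : ℕ) (hvk : v ≤ k) (hwk : w ≤ k) :
    ((Finset.univ.filter
      (fun p : ({A : Finset (Fin n) // A.card = v} × {A : Finset (Fin n) // A.card = v} ×
          {B : Finset (Fin n) // B.card = w} × {B : Finset (Fin n) // B.card = w}) =>
        ((p.1 : Finset (Fin n)) ∪ (p.2.1 : Finset (Fin n)) ∪ (p.2.2.1 : Finset (Fin n)) ∪
          (p.2.2.2 : Finset (Fin n))).card ≤ k)).card : ℕ)
      ≤ n ^ k * k.factorial ^ 3 := by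
  classical
  let ι := ({A : Finset (Fin n) // A.card = v} × {A : Finset (Fin n) // A.card = v} ×
      {B : Finset (Fin n) // B.card = w} × {B : Finset (Fin n) // B.card = w})
  let Un : ι → Finset (Fin n) := fun p =>
    (p.1 : Finset (Fin n)) ∪ (p.2.1 : Finset (Fin n)) ∪ (p.2.2.1 : Finset (Fin n)) ∪
      (p.2.2.2 : Finset (Fin n))
  let Φ : ι → (Fin k → Fin n) × Finset (Fin k) × Finset (Fin k) × Finset (Fin k) :=
    fun p => (gf k p.1.1 (Un p), pos k p.1.1 (Un p) p.2.1.1,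
      pos k p.1.1 (Un p) p.2.2.1.1, pos k p.1.1 (Un p) p.2.2.2.1)
  let T := (Finset.univ : Finset (Fin k → Fin n)) ×ˢ
      Finset.powersetCard v (Finset.univ : Finset (Fin k)) ×ˢ
      Finset.powersetCard w (Finset.univ : Finset (Fin k)) ×ˢ
      Finset.powersetCard w (Finset.univ : Finset (Fin k))
  have hA1 : ∀ p : ι, (p.1 : Finset (Fin n)) ⊆ Un p := fun p x hx => by
    simp only [Un, Finset.mem_union]; tauto
  have hA2 : ∀ p : ι, (p.2.1 : Finset (Fin n)) ⊆ Un p := fun p x hx => by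
    simp only [Un, Finset.mem_union]; tauto
  have hB1 : ∀ p : ι, (p.2.2.1 : Finset (Fin n)) ⊆ Un p := fun p x hx => by
    simp only [Un, Finset.mem_union]; tauto
  have hB2 : ∀ p : ι, (p.2.2.2 : Finset (Fin n)) ⊆ Un p := fun p x hx => by
    simp only [Un, Finset.mem_union]; tauto
  have hcard : (Finset.univ.filter (fun p : ι => (Un p).card ≤ k)).card ≤ T.card := by
    apply Finset.card_le_card_of_injOn Φ
    · intro p hp
      have hU : (Un p).card ≤ k := (Finset.mem_filter.1 hp).2
      simp only [T, Finset.mem_coe, Finset.mem_product, Finset.mem_univ, Finset.mem_powersetCard_univ,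
        true_and]
      exact ⟨(pos_card (hA1 p) hU (hA2 p)).trans p.2.1.2,
        (pos_card (hA1 p) hU (hB1 p)).trans p.2.2.1.2,
        (pos_card (hA1 p) hU (hB2 p)).trans p.2.2.2.2⟩
    · intro p hp q hq hpq
      have hUp : (Un p).card ≤ k := (Finset.mem_filter.1 (Finset.mem_coe.1 hp)).2
      have hUq : (Un q).card ≤ k := (Finset.mem_filter.1 (Finset.mem_coe.1 hq)).2
      have e0 : gf k p.1.1 (Un p) = gf k q.1.1 (Un q) := congrArg Prod.fst hpq
      have e1 : pos k p.1.1 (Un p) p.2.1.1 = pos k q.1.1 (Un q) q.2.1.1 :=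
        congrArg (fun x => x.2.1) hpq
      have e2 : pos k p.1.1 (Un p) p.2.2.1.1 = pos k q.1.1 (Un q) q.2.2.1.1 :=
        congrArg (fun x => x.2.2.1) hpq
      have e3 : pos k p.1.1 (Un p) p.2.2.2.1 = pos k q.1.1 (Un q) q.2.2.2.1 :=
        congrArg (fun x => x.2.2.2) hpq
      have hv1 : p.1.1 = q.1.1 := by
        have h1 := firstv_image (hA1 p) hUp
        have h2 := firstv_image (hA1 q) hUq
        rw [p.1.2] at h1
        rw [q.1.2] at h2
        rw [← h1, ← h2, e0]
      have hv2 : p.2.1.1 = q.2.1.1 := by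
        rw [← pos_image (hA1 p) hUp (hA2 p), ← pos_image (hA1 q) hUq (hA2 q), e0, e1]
      have hv3 : p.2.2.1.1 = q.2.2.1.1 := by
        rw [← pos_image (hA1 p) hUp (hB1 p), ← pos_image (hA1 q) hUq (hB1 q), e0, e2]
      have hv4 : p.2.2.2.1 = q.2.2.2.1 := by
        rw [← pos_image (hA1 p) hUp (hB2 p), ← pos_image (hA1 q) hUq (hB2 q), e0, e3]
      exact Prod.ext (Subtype.ext hv1) (Prod.ext (Subtype.ext hv2)
        (Prod.ext (Subtype.ext hv3) (Subtype.ext hv4)))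
  have hT : T.card = n ^ k * (k.choose v * (k.choose w * k.choose w)) := by
    simp [T, Finset.card_product, Finset.card_powersetCard, Finset.card_univ,
      Fintype.card_fun, Fintype.card_fin]
  calc (Finset.univ.filter (fun p : ι => (Un p).card ≤ k)).card
      ≤ T.card := hcard
    _ = n ^ k * (k.choose v * (k.choose w * k.choose w)) := hT
    _ ≤ n ^ k * (k.factorial * (k.factorial * k.factorial)) := by
        exact Nat.mul_le_mul_left _ (Nat.mul_le_mul (choose_le_factorial k v)
          (Nat.mul_le_mul (choose_le_factorial k w) (choose_le_factorial k w)))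
    _ = n ^ k * k.factorial ^ 3 := by ring

end Stmt14Aux

lemma sum4 {ι₁ ι₂ : Type*} [Fintype ι₁] [Fintype ι₂] (f : ι₁ → ℝ) (g : ι₂ → ℝ) :
    (∑ a, f a) ^ 2 * (∑ b, g b) ^ 2 =
      ∑ p : ι₁ × ι₁ × ι₂ × ι₂, f p.1 * f p.2.1 * g p.2.2.1 * g p.2.2.2 := by
  calc (∑ a, f a) ^ 2 * (∑ b, g b) ^ 2
      = (∑ p : ι₁ × ι₁, f p.1 * f p.2) * (∑ q : ι₂ × ι₂, g q.1 * g q.2) := by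
        rw [sq, sq, Finset.sum_mul_sum, Finset.sum_mul_sum,
          Fintype.sum_prod_type, Fintype.sum_prod_type]
    _ = ∑ p : ι₁ × ι₁, ∑ q : ι₂ × ι₂, (f p.1 * f p.2) * (g q.1 * g q.2) :=
        Finset.sum_mul_sum _ _ _ _
    _ = ∑ r : (ι₁ × ι₁) × (ι₂ × ι₂), (f r.1.1 * f r.1.2) * (g r.2.1 * g r.2.2) :=
        (Fintype.sum_prod_type
          (f := fun r : (ι₁ × ι₁) × (ι₂ × ι₂) =>
            (f r.1.1 * f r.1.2) * (g r.2.1 * g r.2.2))).symm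
    _ = ∑ p : ι₁ × ι₁ × ι₂ × ι₂, f p.1 * f p.2.1 * g p.2.2.1 * g p.2.2.2 := by
        refine Fintype.sum_equiv (Equiv.prodAssoc ι₁ ι₁ (ι₂ × ι₂)) _ _ ?_
        rintro ⟨⟨a, b⟩, c, d⟩
        simp only [Equiv.prodAssoc_apply]
        ring

set_option maxHeartbeats 1000000 in
/-- Let `V = v + w - 1`.  If all quadruple products
`η_{A₁} η_{A₂} η'_{B₁} η'_{B₂}` (indices ranging over `𝒫_v(n)` resp. `𝒫_w(n)`)
are integrable, have expectation `0` whenever one of the four index sets is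
disjoint from the union of the other three, and expectation bounded by `C` in
absolute value, then
`E[(n^{-(v-1/2)} Σ_A η_A)² (n^{-(w-1/2)} Σ_B η'_B)²] ≤ C ((2V)!)³`. -/
theorem stmt14 (v w : ℕ) (hv : 1 ≤ v) (hw : 1 ≤ w) (C : ℝ) (hC : 0 ≤ C)
    (n : ℕ) {Ω : Type*} [MeasurableSpace Ω] (μ : Measure Ω)
    [IsProbabilityMeasure μ]
    (η : {A : Finset (Fin n) // A.card = v} → Ω → ℝ)
    (η' : {B : Finset (Fin n) // B.card = w} → Ω → ℝ)
    (hint : ∀ A₁ A₂ B₁ B₂,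
      Integrable (fun ω => η A₁ ω * η A₂ ω * η' B₁ ω * η' B₂ ω) μ)
    (hzero : ∀ (A₁ A₂ : {A : Finset (Fin n) // A.card = v})
      (B₁ B₂ : {B : Finset (Fin n) // B.card = w}),
      (Disjoint (A₁ : Finset (Fin n)) ((A₂ : Finset (Fin n)) ∪ B₁ ∪ B₂) ∨
       Disjoint (A₂ : Finset (Fin n)) ((A₁ : Finset (Fin n)) ∪ B₁ ∪ B₂) ∨
       Disjoint (B₁ : Finset (Fin n)) ((A₁ : Finset (Fin n)) ∪ A₂ ∪ B₂) ∨
       Disjoint (B₂ : Finset (Fin n)) ((A₁ : Finset (Fin n)) ∪ A₂ ∪ B₁)) →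
      ∫ ω, η A₁ ω * η A₂ ω * η' B₁ ω * η' B₂ ω ∂μ = 0)
    (hbound : ∀ A₁ A₂ B₁ B₂,
      |∫ ω, η A₁ ω * η A₂ ω * η' B₁ ω * η' B₂ ω ∂μ| ≤ C) :
    ∫ ω, ((n : ℝ) ^ (-((v : ℝ) - 1 / 2)) * ∑ A, η A ω) ^ 2 *
        ((n : ℝ) ^ (-((w : ℝ) - 1 / 2)) * ∑ B, η' B ω) ^ 2 ∂μ
      ≤ C * ((2 * (v + w - 1)).factorial : ℝ) ^ 3 := by
  classical
  rcases Nat.eq_zero_or_pos n with hn | hn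
  · -- degenerate case `n = 0`
    subst hn
    haveI : IsEmpty {A : Finset (Fin 0) // A.card = v} := by
      refine ⟨fun A => ?_⟩
      have h := Finset.card_le_univ A.1
      rw [A.2] at h
      simp only [Finset.card_univ, Fintype.card_fin] at h
      omega
    have hz : ∀ ω : Ω, (((0:ℕ) : ℝ) ^ (-((v : ℝ) - 1 / 2)) * ∑ A, η A ω) ^ 2 *
        (((0:ℕ) : ℝ) ^ (-((w : ℝ) - 1 / 2)) * ∑ B, η' B ω) ^ 2 = 0 := by
      intro ω
      rw [Finset.univ_eq_empty, Finset.sum_empty]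
      ring
    simp_rw [hz]
    rw [integral_zero]
    positivity
  · haveI : NeZero n := ⟨hn.ne'⟩
    set k := 2 * (v + w - 1) with hk
    have hn0 : (0:ℝ) < (n:ℝ) := by exact_mod_cast hn
    -- pointwise expansion
    have hpt : ∀ ω, (∑ A, η A ω) ^ 2 * (∑ B, η' B ω) ^ 2 =
        ∑ p : ({A : Finset (Fin n) // A.card = v} × {A : Finset (Fin n) // A.card = v} ×
          {B : Finset (Fin n) // B.card = w} × {B : Finset (Fin n) // B.card = w}),
          η p.1 ω * η p.2.1 ω * η' p.2.2.1 ω * η' p.2.2.2 ω :=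
      fun ω => sum4 (fun A => η A ω) (fun B => η' B ω)
    -- integral of the expansion
    have hInt : ∫ ω, (∑ A, η A ω) ^ 2 * (∑ B, η' B ω) ^ 2 ∂μ
        = ∑ p : ({A : Finset (Fin n) // A.card = v} × {A : Finset (Fin n) // A.card = v} ×
          {B : Finset (Fin n) // B.card = w} × {B : Finset (Fin n) // B.card = w}),
          ∫ ω, η p.1 ω * η p.2.1 ω * η' p.2.2.1 ω * η' p.2.2.2 ω ∂μ := by
      simp_rw [hpt]
      exact integral_finset_sum _
        (fun (p : ({A : Finset (Fin n) // A.card = v} × {A : Finset (Fin n) // A.card = v} ×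
          {B : Finset (Fin n) // B.card = w} × {B : Finset (Fin n) // B.card = w})) _ =>
          hint p.1 p.2.1 p.2.2.1 p.2.2.2)
    set good := Finset.univ.filter
      (fun p : ({A : Finset (Fin n) // A.card = v} × {A : Finset (Fin n) // A.card = v} ×
          {B : Finset (Fin n) // B.card = w} × {B : Finset (Fin n) // B.card = w}) =>
        ¬(Disjoint (p.1 : Finset (Fin n)) ((p.2.1 : Finset (Fin n)) ∪ p.2.2.1 ∪ p.2.2.2) ∨
          Disjoint (p.2.1 : Finset (Fin n)) ((p.1 : Finset (Fin n)) ∪ p.2.2.1 ∪ p.2.2.2) ∨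
          Disjoint (p.2.2.1 : Finset (Fin n)) ((p.1 : Finset (Fin n)) ∪ p.2.1 ∪ p.2.2.2) ∨
          Disjoint (p.2.2.2 : Finset (Fin n)) ((p.1 : Finset (Fin n)) ∪ p.2.1 ∪ p.2.2.1)))
      with hgood
    have hsum_eq : ∑ p : ({A : Finset (Fin n) // A.card = v} ×
          {A : Finset (Fin n) // A.card = v} ×
          {B : Finset (Fin n) // B.card = w} × {B : Finset (Fin n) // B.card = w}),
          ∫ ω, η p.1 ω * η p.2.1 ω * η' p.2.2.1 ω * η' p.2.2.2 ω ∂μ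
        = ∑ p ∈ good, ∫ ω, η p.1 ω * η p.2.1 ω * η' p.2.2.1 ω * η' p.2.2.2 ω ∂μ := by
      rw [hgood]
      refine (Finset.sum_filter_of_ne ?_).symm
      intro p _ hne hd
      exact hne (hzero p.1 p.2.1 p.2.2.1 p.2.2.2 hd)
    set small := Finset.univ.filter
      (fun p : ({A : Finset (Fin n) // A.card = v} × {A : Finset (Fin n) // A.card = v} ×
          {B : Finset (Fin n) // B.card = w} × {B : Finset (Fin n) // B.card = w}) =>
        ((p.1 : Finset (Fin n)) ∪ (p.2.1 : Finset (Fin n)) ∪ (p.2.2.1 : Finset (Fin n)) ∪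
          (p.2.2.2 : Finset (Fin n))).card ≤ k)
      with hsmall
    have hsubset : good ⊆ small := by
      intro p hp
      rw [hgood, Finset.mem_filter] at hp
      rw [hsmall, Finset.mem_filter]
      refine ⟨Finset.mem_univ _, ?_⟩
      have hnd := hp.2
      push_neg at hnd
      obtain ⟨h1, h2, h3, h4⟩ := hnd
      have hb := Stmt14Aux.union4_card_bound _ _ _ _ h1 h2 h3 h4
      rw [p.1.2, p.2.1.2, p.2.2.1.2, p.2.2.2.2] at hb
      omega
    have hsmallcard : small.card ≤ n ^ k * k.factorial ^ 3 := Stmt14Aux.count_bound v w k (by omega) (by omega)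
    have hgoodcard : (good.card : ℝ) ≤ ((n ^ k * k.factorial ^ 3 : ℕ) : ℝ) := by
      exact_mod_cast (Finset.card_le_card hsubset).trans hsmallcard
    -- bound the sum
    have hsum_le : ∑ p : ({A : Finset (Fin n) // A.card = v} ×
          {A : Finset (Fin n) // A.card = v} ×
          {B : Finset (Fin n) // B.card = w} × {B : Finset (Fin n) // B.card = w}),
          ∫ ω, η p.1 ω * η p.2.1 ω * η' p.2.2.1 ω * η' p.2.2.2 ω ∂μ
        ≤ ((n ^ k * k.factorial ^ 3 : ℕ) : ℝ) * C := by
      rw [hsum_eq]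
      calc ∑ p ∈ good, ∫ ω, η p.1 ω * η p.2.1 ω * η' p.2.2.1 ω * η' p.2.2.2 ω ∂μ
          ≤ ∑ p ∈ good, |∫ ω, η p.1 ω * η p.2.1 ω * η' p.2.2.1 ω * η' p.2.2.2 ω ∂μ| :=
            Finset.sum_le_sum (fun p _ => le_abs_self _)
        _ ≤ ∑ _p ∈ good, C := Finset.sum_le_sum
            (fun p _ => hbound p.1 p.2.1 p.2.2.1 p.2.2.2)
        _ = (good.card : ℝ) * C := by rw [Finset.sum_const, nsmul_eq_mul]
        _ ≤ ((n ^ k * k.factorial ^ 3 : ℕ) : ℝ) * C :=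
            mul_le_mul_of_nonneg_right hgoodcard hC
    -- pull out the constants
    have hconst : ∀ ω : Ω, ((n : ℝ) ^ (-((v : ℝ) - 1 / 2)) * ∑ A, η A ω) ^ 2 *
        ((n : ℝ) ^ (-((w : ℝ) - 1 / 2)) * ∑ B, η' B ω) ^ 2
        = ((n : ℝ) ^ (-((v : ℝ) - 1 / 2))) ^ 2 * ((n : ℝ) ^ (-((w : ℝ) - 1 / 2))) ^ 2 *
          ((∑ A, η A ω) ^ 2 * (∑ B, η' B ω) ^ 2) := fun ω => by ring
    -- the constant
    have hcd : ((n : ℝ) ^ (-((v : ℝ) - 1 / 2))) ^ 2 * ((n : ℝ) ^ (-((w : ℝ) - 1 / 2))) ^ 2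
        = (((n:ℝ)) ^ (k:ℕ))⁻¹ := by
      rw [← Real.rpow_natCast ((n : ℝ) ^ (-((v : ℝ) - 1 / 2))) 2,
        ← Real.rpow_natCast ((n : ℝ) ^ (-((w : ℝ) - 1 / 2))) 2,
        ← Real.rpow_mul hn0.le, ← Real.rpow_mul hn0.le, ← Real.rpow_add hn0]
      have hkr : ((k:ℕ):ℝ) = 2 * ((v:ℝ) + (w:ℝ)) - 2 := by
        rw [hk]
        have h1 : (2 * (v + w - 1)) = 2 * (v + w) - 2 := by omega
        rw [h1, Nat.cast_sub (by omega)]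
        push_cast
        ring
      have he : -((v : ℝ) - 1 / 2) * ((2:ℕ):ℝ) + -((w : ℝ) - 1 / 2) * ((2:ℕ):ℝ)
          = -((k:ℕ):ℝ) := by
        rw [hkr]; push_cast; ring
      rw [he, Real.rpow_neg hn0.le, Real.rpow_natCast]
    -- put everything together
    calc ∫ ω, ((n : ℝ) ^ (-((v : ℝ) - 1 / 2)) * ∑ A, η A ω) ^ 2 *
          ((n : ℝ) ^ (-((w : ℝ) - 1 / 2)) * ∑ B, η' B ω) ^ 2 ∂μ
        = (((n:ℝ)) ^ (k:ℕ))⁻¹ * ∫ ω, (∑ A, η A ω) ^ 2 * (∑ B, η' B ω) ^ 2 ∂μ := by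
          simp_rw [hconst]
          rw [integral_const_mul, hcd]
      _ ≤ (((n:ℝ)) ^ (k:ℕ))⁻¹ * (((n ^ k * k.factorial ^ 3 : ℕ) : ℝ) * C) := by
          rw [hInt]
          apply mul_le_mul_of_nonneg_left hsum_le
          positivity
      _ = C * ((k.factorial : ℕ) : ℝ) ^ 3 := by
          have hne : ((n:ℝ)) ^ (k:ℕ) ≠ 0 := by positivity
          push_cast
          field_simp
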